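/- arXiv:1712.02151 — 7 statements merged into one kernel-verified Lean document; each statement's English description precedes it below -/
import Mathlib

section
/- (ε-Proximity) Let N ≥ 2, let p and q be distributions on X with p(x) > 0 for all x ∈ X, let y ∈ X, let 0 < α < 1 and 0 ≤ ε ≤ 1 − 1/N. Define p'_0 = update_{α,0}(p, y) and p'_ε = update_{α,ε}(p, y). Then D(q‖p'_0) ≥ D(q‖p'_ε) − log(1/(1−ε)). -/
open Finset Real

/-- A probability distribution on the alphabet `Fin N`. -/
def IsDist (N : ℕ) (p : Fin N → ℝ) : Prop :=
  (∀ x, 0 ≤ p x) ∧ (∑ x, p x) = 1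

/-- KL divergence `D(p ‖ q) = ∑_{x : p x > 0} p x * log (p x / q x)`. -/
noncomputable def KL {N : ℕ} (p q : Fin N → ℝ) : ℝ :=
  ∑ x, if 0 < p x then p x * Real.log (p x / q x) else 0

/-- Variation in probability mass `‖p − q‖ = ∑ x, |p x − q x|`. -/
noncomputable def tvar {N : ℕ} (p q : Fin N → ℝ) : ℝ :=
  ∑ x, |p x - q x|

/-- The Probability Smoothing update `update_{α,ε}(p, y)`. -/
noncomputable def psUpdate {N : ℕ} (α ε : ℝ) (p : Fin N → ℝ) (y : Fin N) :
    Fin N → ℝ :=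
  fun x => if x = y then α * p x + (1 - α) * (1 - ε)
           else α * p x + (1 - α) * (ε / ((N : ℝ) - 1))

/-- PS predictions with fixed parameters: `psPred α ε p x t = PS(·; x_{1:t})`
where the input letters are `x 1, x 2, …` (1-indexed). -/
noncomputable def psPred {N : ℕ} (α ε : ℝ) (p : Fin N → ℝ) (x : ℕ → Fin N) :
    ℕ → Fin N → ℝ
  | 0 => p
  | t + 1 => psUpdate α ε (psPred α ε p x t) (x (t + 1))

/-- **ε-Proximity** (Lemma 1). -/
theorem eps_proximity {N : ℕ} (hN : 2 ≤ N) (p q : Fin N → ℝ)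
    (hp : IsDist N p) (hq : IsDist N q) (hppos : ∀ x, 0 < p x)
    (y : Fin N) (α ε : ℝ) (hα0 : 0 < α) (hα1 : α < 1)
    (hε0 : 0 ≤ ε) (hε1 : ε ≤ 1 - 1 / (N : ℝ)) :
    KL q (psUpdate α 0 p y) ≥ KL q (psUpdate α ε p y) - Real.log (1 / (1 - ε)) := by
  have hN' : (2:ℝ) ≤ N := by exact_mod_cast hN
  have hNpos : (0:ℝ) < N := by linarith
  have hεlt : ε < 1 := by
    have : (0:ℝ) < 1 / N := by positivity
    linarith
  have h1ε : 0 < 1 - ε := by linarith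
  have h1α : 0 < 1 - α := by linarith
  set p0 := psUpdate α 0 p y with hp0def
  set pe := psUpdate α ε p y with hpedef
  have hp0 : ∀ x, 0 < p0 x := by
    intro x
    simp only [hp0def, psUpdate, zero_div, mul_zero, add_zero, sub_zero, mul_one]
    split <;> nlinarith [hppos x]
  have hpe : ∀ x, 0 < pe x := by
    intro x
    simp only [hpedef, psUpdate]
    split
    · nlinarith [hppos x]
    · have : 0 ≤ ε / ((N:ℝ) - 1) := by
        apply div_nonneg hε0; linarith
      nlinarith [hppos x]
  have hkey : ∀ x, (1 - ε) * p0 x ≤ pe x := by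
    intro x
    simp only [hp0def, hpedef, psUpdate, zero_div, mul_zero, add_zero, sub_zero, mul_one]
    split
    · nlinarith [mul_nonneg hε0 (mul_pos hα0 (hppos x)).le]
    · have h2 : 0 ≤ ε / ((N:ℝ) - 1) := by
        apply div_nonneg hε0; linarith
      nlinarith [mul_nonneg hε0 (mul_pos hα0 (hppos x)).le, mul_nonneg h1α.le h2]
  suffices h : KL q pe - KL q p0 ≤ Real.log (1 / (1 - ε)) by linarith
  have hlog : Real.log (1 / (1 - ε)) = -Real.log (1 - ε) := by
    rw [one_div, Real.log_inv]
  have hsum : KL q pe - KL q p0 = ∑ x, ((if 0 < q x then q x * Real.log (q x / pe x) else 0)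
      - (if 0 < q x then q x * Real.log (q x / p0 x) else 0)) := by
    rw [KL, KL, Finset.sum_sub_distrib]
  rw [hsum]
  calc ∑ x, ((if 0 < q x then q x * Real.log (q x / pe x) else 0)
      - (if 0 < q x then q x * Real.log (q x / p0 x) else 0))
      ≤ ∑ x, q x * Real.log (1 / (1 - ε)) := by
        apply Finset.sum_le_sum
        intro x _
        by_cases hqx : 0 < q x
        · simp only [hqx, if_pos]
          rw [← mul_sub]
          apply mul_le_mul_of_nonneg_left _ (le_of_lt hqx)
          rw [Real.log_div (ne_of_gt hqx) (ne_of_gt (hpe x)),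
            Real.log_div (ne_of_gt hqx) (ne_of_gt (hp0 x)), hlog]
          have := Real.log_le_log (mul_pos h1ε (hp0 x)) (hkey x)
          rw [Real.log_mul (ne_of_gt h1ε) (ne_of_gt (hp0 x))] at this
          linarith
        · simp only [hqx, if_neg, not_false_iff, sub_zero]
          have : 0 ≤ q x * Real.log (1 / (1 - ε)) := by
            apply mul_nonneg (hq.1 x)
            apply Real.log_nonneg
            rw [le_div_iff₀ h1ε]; linarith
          simpa using this
    _ = Real.log (1 / (1 - ε)) := by
        rw [← Finset.sum_mul, hq.2, one_mul]
end

section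
/- (Progress Invariant) Let N ≥ 2, let p and q be distributions on X with p(x) > 0 for all x ∈ X, let y ∈ X with q(y) > 0, let u be the uniform distribution on X (u(x) = 1/N), let 0 < α < 1 and 0 ≤ ε ≤ 1 − 1/N, and set p' = update_{α,ε}(p, y). Then log(1/p(y)) − log(1/q(y)) ≤ (1/log(1/α))·[D(q‖p) − D(q‖p') + log(1/(1−ε))] + N·[D(u‖p) − D(u‖p') + log(1/((1−ε)·α))]. -/
open Finset Real

lemma claimC (α u c g : ℝ) (hα0 : 0 < α) (hα1 : α < 1) (hu : 1 ≤ u)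
    (hc : c = -Real.log α) (hg : g = Real.log (α + (1 - α) * u)) :
    Real.log u ≤ Real.log ((c + g) / c) + g + c := by
  have hu0 : 0 < u := lt_of_lt_of_le one_pos hu
  have hA0 : 0 < α + (1 - α) * u := by nlinarith
  have hA1 : 1 ≤ α + (1 - α) * u := by nlinarith
  have hc0 : 0 < c := by
    rw [hc]; simpa using Real.log_neg hα0 hα1
  have hg0 : 0 ≤ g := by rw [hg]; exact Real.log_nonneg hA1
  have hcβ : 1 - α ≤ c := by
    have := Real.log_le_sub_one_of_pos hα0; rw [hc]; linarith
  have hcu : c * α ≤ 1 - α := by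
    have h := Real.log_le_sub_one_of_pos (inv_pos.mpr hα0)
    rw [Real.log_inv] at h
    have hcle : c ≤ α⁻¹ - 1 := by rw [hc]; linarith
    have := mul_le_mul_of_nonneg_right hcle hα0.le
    rwa [sub_mul, inv_mul_cancel₀ hα0.ne', one_mul] at this
  have hgA : (α + (1 - α) * u) - 1 ≤ g * (α + (1 - α) * u) := by
    have h := Real.log_le_sub_one_of_pos (inv_pos.mpr hA0)
    rw [Real.log_inv, ← hg] at h
    have h2 : 1 - (α + (1 - α) * u)⁻¹ ≤ g := by linarith
    have := mul_le_mul_of_nonneg_right h2 hA0.le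
    rwa [sub_mul, one_mul, inv_mul_cancel₀ hA0.ne'] at this
  have key : c * α * u ≤ (c + g) * (α + (1 - α) * u) := by
    nlinarith [mul_le_mul_of_nonneg_right hcβ hA0.le,
      mul_le_mul_of_nonneg_right hcu hu0.le,
      mul_nonneg (mul_nonneg (sub_nonneg.mpr hα1.le) (sub_nonneg.mpr hα1.le))
        (sub_nonneg.mpr hu)]
  have hcg0 : 0 < c + g := by linarith
  have hlog : Real.log (c * α * u) ≤ Real.log ((c + g) * (α + (1 - α) * u)) :=
    Real.log_le_log (by positivity) key
  have e1 : Real.log (c * α * u) = Real.log c + Real.log α + Real.log u := by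
    rw [Real.log_mul (by positivity) hu0.ne', Real.log_mul hc0.ne' hα0.ne']
  have e2 : Real.log ((c + g) * (α + (1 - α) * u)) = Real.log (c + g) + g := by
    rw [Real.log_mul hcg0.ne' hA0.ne', ← hg]
  have e3 : Real.log ((c + g) / c) = Real.log (c + g) - Real.log c :=
    Real.log_div hcg0.ne' hc0.ne'
  have e4 : Real.log α = -c := by rw [hc]; ring
  rw [e1, e2, e4] at hlog
  linarith [e3, hlog]

lemma master (Nr : ℝ) (hN : 2 ≤ Nr) (α ε qy w c e g : ℝ)
    (hα0 : 0 < α) (hα1 : α < 1) (hε0 : 0 ≤ ε) (hε' : 0 < 1 - ε)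
    (hqy0 : 0 < qy) (hqy1 : qy ≤ 1) (hw0 : 0 < w) (hw1 : w ≤ 1)
    (hc : c = -Real.log α) (he : e = -Real.log (1 - ε))
    (hg : g = Real.log (α + (1 - α) * ((1 - ε) / w))) :
    Real.log qy - Real.log w ≤
      (qy * g - (1 - qy) * c + e) / c + g + c + Nr * e := by
  set u := (1 - ε) / w with hu_def
  have hu0 : 0 < u := div_pos hε' hw0
  have hc0 : 0 < c := by rw [hc]; simpa using Real.log_neg hα0 hα1
  have he0 : 0 ≤ e := by
    rw [he]
    simp only [neg_nonneg]
    exact Real.log_nonpos (by linarith) (by linarith)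
  have hlogu : Real.log u = -e - Real.log w := by
    rw [hu_def, Real.log_div hε'.ne' hw0.ne', he]; ring
  have hA0 : 0 < α + (1 - α) * u := by nlinarith
  have hNe : 0 ≤ (Nr - 1) * e := mul_nonneg (by linarith) he0
  rcases le_total 1 u with hu | hu
  · -- case 1 ≤ u
    have hclaim := claimC α u c g hα0 hα1 hu hc hg
    have hg0 : 0 ≤ g := by rw [hg]; exact Real.log_nonneg (by nlinarith)
    have ha0 : 0 < (c + g) / c := div_pos (by linarith) hc0
    have hlq : Real.log qy ≤ ((c + g) / c) * qy - 1 - Real.log ((c + g) / c) := by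
      have h := Real.log_le_sub_one_of_pos (mul_pos ha0 hqy0)
      rw [Real.log_mul ha0.ne' hqy0.ne'] at h; linarith
    have hrw : (qy * g - (1 - qy) * c + e) / c = ((c + g) / c) * qy - 1 + e / c := by
      field_simp; ring
    have hec : 0 ≤ e / c := div_nonneg he0 hc0.le
    rw [hrw]
    linarith [hclaim, hlq, hlogu]
  · -- case u ≤ 1
    have hg_le0 : g ≤ 0 := by
      rw [hg]; exact Real.log_nonpos hA0.le (by nlinarith)
    have hg_ge : Real.log u ≤ g := by
      rw [hg]; exact Real.log_le_log hu0 (by nlinarith)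
    have hu_ge : 1 - ε ≤ u := by rw [hu_def, le_div_iff₀ hw0]; nlinarith
    have hge : -e ≤ Real.log u := by
      have := Real.log_le_log hε' hu_ge
      rw [he]; linarith
    have hlq : Real.log qy ≤ qy - 1 := by
      have := Real.log_le_sub_one_of_pos hqy0; linarith
    have hnum : g ≤ qy * g := by nlinarith
    have hdiv : (g - (1 - qy) * c + e) / c ≤ (qy * g - (1 - qy) * c + e) / c := by
      exact (div_le_div_iff_of_pos_right hc0).mpr (by linarith)
    have hrw : (g - (1 - qy) * c + e) / c = (g + e) / c - (1 - qy) := by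
      field_simp; ring
    have hge2 : 0 ≤ (g + e) / c := div_nonneg (by linarith) hc0.le
    rw [hrw] at hdiv
    linarith [hlogu, hdiv]

lemma kl_sub_kl {N : ℕ} (q p p' : Fin N → ℝ) (hq : ∀ x, 0 ≤ q x)
    (hp : ∀ x, 0 < p x) (hp' : ∀ x, 0 < p' x) :
    KL q p - KL q p' = ∑ x, q x * Real.log (p' x / p x) := by
  unfold KL
  rw [← Finset.sum_sub_distrib]
  apply Finset.sum_congr rfl
  intro x _
  by_cases h : 0 < q x
  · simp only [if_pos h]
    rw [Real.log_div h.ne' (hp x).ne', Real.log_div h.ne' (hp' x).ne',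
        Real.log_div (hp' x).ne' (hp x).ne']
    ring
  · have h0 : q x = 0 := le_antisymm (not_lt.mp h) (hq x)
    simp [h, h0]

lemma sum_ratio_ge {N : ℕ} (q p p' : Fin N → ℝ) (y : Fin N)
    (hq : ∀ x, 0 ≤ q x) (hp : ∀ x, 0 < p x) (α : ℝ) (hα0 : 0 < α)
    (hge : ∀ x, x ≠ y → α * p x ≤ p' x) :
    q y * Real.log (p' y / p y) + (∑ x ∈ univ.erase y, q x) * Real.log α
      ≤ ∑ x, q x * Real.log (p' x / p x) := by
  rw [← Finset.add_sum_erase univ (fun x => q x * Real.log (p' x / p x)) (mem_univ y)]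
  apply add_le_add_right
  rw [Finset.sum_mul]
  apply Finset.sum_le_sum
  intro x hx
  have hxy : x ≠ y := Finset.ne_of_mem_erase hx
  apply mul_le_mul_of_nonneg_left _ (hq x)
  apply Real.log_le_log hα0
  rw [le_div_iff₀ (hp x)]
  linarith [hge x hxy]

/-- **Progress Invariant** (Lemma 2). -/

theorem progress_invariant {N : ℕ} (hN : 2 ≤ N) (p q : Fin N → ℝ)
    (hp : IsDist N p) (hq : IsDist N q) (hppos : ∀ x, 0 < p x)
    (y : Fin N) (hqy : 0 < q y) (α ε : ℝ) (hα0 : 0 < α) (hα1 : α < 1)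
    (hε0 : 0 ≤ ε) (hε1 : ε ≤ 1 - 1 / (N : ℝ)) :
    Real.log (1 / p y) - Real.log (1 / q y) ≤
      (1 / Real.log (1 / α)) *
        (KL q p - KL q (psUpdate α ε p y) + Real.log (1 / (1 - ε))) +
      (N : ℝ) *
        (KL (fun _ : Fin N => (N : ℝ)⁻¹) p
          - KL (fun _ : Fin N => (N : ℝ)⁻¹) (psUpdate α ε p y)
          + Real.log (1 / ((1 - ε) * α))) := by
  obtain ⟨hq0, hq1⟩ := hq
  obtain ⟨hp0, hp1⟩ := hp
  have hN2 : (2:ℝ) ≤ (N:ℝ) := by exact_mod_cast hN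
  have hNpos : (0:ℝ) < (N:ℝ) := by linarith
  have hε' : 0 < 1 - ε := by
    have h1 : (0:ℝ) < 1 / (N:ℝ) := by positivity
    linarith
  set p' := psUpdate α ε p y with hp'def
  have hβ : 0 < 1 - α := by linarith
  have hN1 : (0:ℝ) < (N:ℝ) - 1 := by linarith
  have hp'pos : ∀ x, 0 < p' x := by
    intro x
    rw [hp'def]; unfold psUpdate
    by_cases h : x = y
    · simp only [if_pos h]
      exact add_pos (mul_pos hα0 (hppos x)) (mul_pos hβ hε')
    · simp only [if_neg h]
      exact add_pos_of_pos_of_nonneg (mul_pos hα0 (hppos x))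
        (mul_nonneg hβ.le (div_nonneg hε0 hN1.le))
  have hp'y : p' y = α * p y + (1 - α) * (1 - ε) := by
    rw [hp'def]; unfold psUpdate; simp
  have hp'ge : ∀ x, x ≠ y → α * p x ≤ p' x := by
    intro x hx; rw [hp'def]; unfold psUpdate; rw [if_neg hx]
    nlinarith [div_nonneg hε0 hN1.le]
  set c := Real.log (1 / α) with hcdef
  have hc_eq : c = -Real.log α := by rw [hcdef, one_div, Real.log_inv]
  set e := Real.log (1 / (1 - ε)) with hedef
  have he_eq : e = -Real.log (1 - ε) := by rw [hedef, one_div, Real.log_inv]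
  have hc0 : 0 < c := by rw [hc_eq]; simpa using Real.log_neg hα0 hα1
  have hec : Real.log (1 / ((1 - ε) * α)) = e + c := by
    rw [one_div, Real.log_inv, Real.log_mul hε'.ne' hα0.ne', he_eq, hc_eq]; ring
  set g := Real.log (p' y / p y) with hgdef
  have hqy1 : q y ≤ 1 := by
    have := Finset.single_le_sum (fun x _ => hq0 x) (mem_univ y)
    linarith
  have hw1 : p y ≤ 1 := by
    have := Finset.single_le_sum (fun x _ => (hppos x).le) (mem_univ y)
    linarith
  have hsumq : ∑ x ∈ univ.erase y, q x = 1 - q y := by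
    have := Finset.add_sum_erase univ q (mem_univ y)
    rw [hq1] at this; linarith
  have hKq : q y * g - (1 - q y) * c ≤ KL q p - KL q p' := by
    rw [kl_sub_kl q p p' hq0 hppos hp'pos]
    have := sum_ratio_ge q p p' y hq0 hppos α hα0 hp'ge
    rw [hsumq, hc_eq] at *
    linarith [this]
  have hcard : ∑ x ∈ univ.erase y, (1:ℝ) = (N:ℝ) - 1 := by
    rw [Finset.sum_const, Finset.card_erase_of_mem (mem_univ y), Finset.card_univ,
      Fintype.card_fin, nsmul_eq_mul, mul_one, Nat.cast_sub (by omega : 1 ≤ N),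
      Nat.cast_one]
  have hKu : g - ((N:ℝ) - 1) * c ≤
      (N:ℝ) * (KL (fun _ : Fin N => (N:ℝ)⁻¹) p - KL (fun _ : Fin N => (N:ℝ)⁻¹) p') := by
    have hD : (N:ℝ) * (KL (fun _ : Fin N => (N:ℝ)⁻¹) p - KL (fun _ : Fin N => (N:ℝ)⁻¹) p')
        = ∑ x, Real.log (p' x / p x) := by
      rw [kl_sub_kl (fun _ => (N:ℝ)⁻¹) p p' (fun _ => by positivity) hppos hp'pos]
      rw [← Finset.mul_sum, ← mul_assoc, mul_inv_cancel₀ hNpos.ne', one_mul]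
    rw [hD]
    have := sum_ratio_ge (fun _ => (1:ℝ)) p p' y (fun _ => zero_le_one) hppos α hα0 hp'ge
    simp only [one_mul] at this
    rw [hcard, hc_eq] at *
    linarith [this]
  have hg_eq : g = Real.log (α + (1 - α) * ((1 - ε) / p y)) := by
    rw [hgdef, hp'y]
    congr 1
    rw [add_div, mul_div_assoc, div_self (hppos y).ne', mul_one, mul_div_assoc]
  have hM := master (N:ℝ) hN2 α ε (q y) (p y) c e g hα0 hα1 hε0 hε' hqy
    hqy1 (hppos y) hw1 hc_eq he_eq hg_eq
  have hdivq : (q y * g - (1 - q y) * c + e) / c ≤ (KL q p - KL q p' + e) / c :=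
    (div_le_div_iff_of_pos_right hc0).mpr (by linarith)
  have hlhs1 : Real.log (1 / p y) = -Real.log (p y) := by rw [one_div, Real.log_inv]
  have hlhs2 : Real.log (1 / q y) = -Real.log (q y) := by rw [one_div, Real.log_inv]
  have honec : (1 / c) * (KL q p - KL q p' + e) = (KL q p - KL q p' + e) / c := by ring
  rw [hlhs1, hlhs2, hec, honec]
  nlinarith [hM, hdivq, hKu, hKq]
end

section
/- (KL Difference L1-Bound) Let N ≥ 2, let m > 0, and let p and w be distributions on X with p(x) ≥ m and w(x) ≥ m for all x ∈ X. Then for any distribution v on X, D(w‖p) − D(v‖p) ≤ log(1/m) · ‖w − v‖. -/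
open Finset Real

/-- **KL Difference L1-Bound** (Lemma 3). -/
theorem kl_difference_l1_bound {N : ℕ} (hN : 2 ≤ N) (m : ℝ) (hm : 0 < m)
    (p w v : Fin N → ℝ) (hp : IsDist N p) (hw : IsDist N w) (hv : IsDist N v)
    (hpm : ∀ x, m ≤ p x) (hwm : ∀ x, m ≤ w x) :
    KL w p - KL v p ≤ Real.log (1 / m) * tvar w v := by
  obtain ⟨hp0, hp1⟩ := hp
  obtain ⟨hw0, hw1⟩ := hw
  obtain ⟨hv0, hv1⟩ := hv
  have hNpos : 0 < N := by omega
  have hple : ∀ x, p x ≤ 1 := fun x => hp1 ▸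
    Finset.single_le_sum (fun i _ => hp0 i) (Finset.mem_univ x)
  have hwle : ∀ x, w x ≤ 1 := fun x => hw1 ▸
    Finset.single_le_sum (fun i _ => hw0 i) (Finset.mem_univ x)
  have hm1 : m ≤ 1 := le_trans (hwm ⟨0, hNpos⟩) (hwle _)
  have hlog1m : Real.log (1 / m) = -Real.log m := by
    rw [one_div, Real.log_inv]
  have hlogm : 0 ≤ Real.log (1 / m) := by
    rw [hlog1m]
    simpa using Real.log_nonpos hm.le hm1
  have key : ∀ x : Fin N, (if 0 < w x then w x * Real.log (w x / p x) else 0)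
      - (if 0 < v x then v x * Real.log (v x / p x) else 0)
      ≤ Real.log (1/m) * |w x - v x| + (if 0 < v x then w x - v x else 0) := by
    intro x
    have hwx : 0 < w x := lt_of_lt_of_le hm (hwm x)
    have hpx : 0 < p x := lt_of_lt_of_le hm (hpm x)
    rw [if_pos hwx]
    have hlogwp : |Real.log (w x / p x)| ≤ Real.log (1/m) := by
      rw [abs_le, hlog1m]
      constructor
      · have : m ≤ w x / p x := by
          rw [le_div_iff₀ hpx]
          calc m * p x ≤ m * 1 := by nlinarith [hple x, hm.le]
          _ = m := mul_one m
          _ ≤ w x := hwm x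
        linarith [Real.log_le_log hm this]
      · have : w x / p x ≤ 1 / m := by
          rw [div_le_div_iff₀ hpx hm]
          nlinarith [hwle x, hpm x]
        calc Real.log (w x / p x) ≤ Real.log (1/m) :=
          Real.log_le_log (div_pos hwx hpx) this
        _ = -Real.log m := hlog1m
    by_cases hvx : 0 < v x
    · rw [if_pos hvx, if_pos hvx]
      have h1 : w x * Real.log (w x / p x) - v x * Real.log (v x / p x)
          = (w x - v x) * Real.log (w x / p x) + v x * Real.log (w x / v x) := by
        rw [Real.log_div hwx.ne' hpx.ne', Real.log_div hvx.ne' hpx.ne',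
          Real.log_div hwx.ne' hvx.ne']
        ring
      rw [h1]
      have h2 : (w x - v x) * Real.log (w x / p x) ≤ Real.log (1/m) * |w x - v x| := by
        calc (w x - v x) * Real.log (w x / p x)
            ≤ |(w x - v x) * Real.log (w x / p x)| := le_abs_self _
        _ = |w x - v x| * |Real.log (w x / p x)| := abs_mul _ _
        _ ≤ |w x - v x| * Real.log (1/m) :=
            mul_le_mul_of_nonneg_left hlogwp (abs_nonneg _)
        _ = Real.log (1/m) * |w x - v x| := mul_comm _ _
      have h3 : v x * Real.log (w x / v x) ≤ w x - v x := by
        have hl := Real.log_le_sub_one_of_pos (div_pos hwx hvx)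
        calc v x * Real.log (w x / v x) ≤ v x * (w x / v x - 1) :=
          mul_le_mul_of_nonneg_left hl hvx.le
        _ = w x - v x := by field_simp
      linarith
    · rw [if_neg hvx, if_neg hvx]
      have hv0x : v x = 0 := le_antisymm (not_lt.mp hvx) (hv0 x)
      rw [hv0x]
      have : Real.log (w x / p x) ≤ Real.log (1/m) := (abs_le.mp hlogwp).2
      have habs : |w x - 0| = w x := by rw [sub_zero, abs_of_pos hwx]
      rw [habs]
      nlinarith [hwx.le]
  have hsum : KL w p - KL v p
      ≤ ∑ x, (Real.log (1/m) * |w x - v x| + (if 0 < v x then w x - v x else 0)) := by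
    rw [KL, KL, ← Finset.sum_sub_distrib]
    exact Finset.sum_le_sum (fun x _ => key x)
  have hE : ∑ x, (if 0 < v x then w x - v x else 0) ≤ 0 := by
    have h1 : ∑ x, (if 0 < v x then w x - v x else 0)
        = (∑ x, if 0 < v x then w x else 0) - (∑ x, if 0 < v x then v x else 0) := by
      rw [← Finset.sum_sub_distrib]
      apply Finset.sum_congr rfl
      intro x _
      by_cases hvx : 0 < v x <;> simp [hvx]
    have h2 : (∑ x, if 0 < v x then v x else 0) = 1 := by
      rw [← hv1]
      apply Finset.sum_congr rfl
      intro x _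
      by_cases hvx : 0 < v x
      · simp [hvx]
      · simp [hvx, le_antisymm (not_lt.mp hvx) (hv0 x)]
    have h3 : (∑ x, if 0 < v x then w x else 0) ≤ 1 := by
      rw [← hw1]
      apply Finset.sum_le_sum
      intro x _
      by_cases hvx : 0 < v x <;> simp [hvx, hw0 x]
    rw [h1, h2]
    linarith
  calc KL w p - KL v p
      ≤ ∑ x, (Real.log (1/m) * |w x - v x| + (if 0 < v x then w x - v x else 0)) := hsum
  _ = Real.log (1/m) * tvar w v + ∑ x, (if 0 < v x then w x - v x else 0) := by
      rw [Finset.sum_add_distrib, ← Finset.mul_sum, tvar]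
  _ ≤ Real.log (1/m) * tvar w v := by linarith
end

section
/- (Segment Sum Lemma) Let P be a partition of {1,…,T} into consecutive integer intervals (segments) [t_k, t_{k+1}) with 1 = t_1 < … < t_{n+1} = T+1, let F be the first segment and L the last segment of P, let w_1 ≤ w_2 ≤ … ≤ w_{T+1} be real weights, let d_1, …, d_{T+1} : P → ℝ, let D ∈ ℝ satisfy d_t(S) ≤ D for all 1 ≤ t ≤ T+1 and all S ∈ P, and let T be the transition set of P. Then ∑_{S∈P} ∑_{t∈S} w_t·(d_t(S) − d_{t+1}(S)) ≤ w_{T+1}·(D − d_{T+1}(L)) − w_1·(D − d_1(F)) + ∑_{(t,A,B)∈T} w_t·(d_t(B) − d_t(A)). -/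
open Finset

/-- **Segment Sum Lemma** (Lemma 6).  The partition of `{1,…,T}` is given by
segment boundaries `b 0 = 1 < b 1 < … < b n = T + 1`; segment `k` is
`[b k, b (k+1))`, the first segment is segment `0` and the last is segment
`n − 1`.  `d t k` stands for `d_t(S_k)` and the transitions are at the points
`b (k+1)` for `k < n − 1`, from segment `k` to segment `k + 1`. -/
theorem segment_sum (T n : ℕ) (hn : 1 ≤ n) (b : ℕ → ℕ)
    (hb0 : b 0 = 1) (hbn : b n = T + 1) (hbmono : ∀ k < n, b k < b (k + 1))
    (w : ℕ → ℝ) (hw : ∀ t ∈ Finset.Icc 1 T, w t ≤ w (t + 1))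
    (d : ℕ → ℕ → ℝ) (D : ℝ)
    (hD : ∀ t ∈ Finset.Icc 1 (T + 1), ∀ k ∈ Finset.range n, d t k ≤ D) :
    ∑ k ∈ Finset.range n, ∑ t ∈ Finset.Ico (b k) (b (k + 1)),
        w t * (d t k - d (t + 1) k) ≤
      w (T + 1) * (D - d (T + 1) (n - 1)) - w 1 * (D - d 1 0) +
      ∑ k ∈ Finset.range (n - 1),
        w (b (k + 1)) * (d (b (k + 1)) (k + 1) - d (b (k + 1)) k) := by
  set f : ℕ → ℕ → ℝ := fun t k => w t * (D - d t k) with hf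
  -- b is monotone on [0, n]
  have hmono : ∀ j k, j ≤ k → k ≤ n → b j ≤ b k := by
    intro j k hjk hkn
    induction k with
    | zero => obtain rfl := Nat.le_zero.mp hjk; exact le_rfl
    | succ m ih =>
      rcases Nat.eq_or_lt_of_le hjk with h | h
      · exact h ▸ le_rfl
      · exact le_trans (ih (by omega) (by omega)) (le_of_lt (hbmono m (by omega)))
  have h1 : ∀ k, k ≤ n → 1 ≤ b k := fun k hk => hb0 ▸ hmono 0 k (Nat.zero_le _) hk
  have h2 : ∀ k, k ≤ n → b k ≤ T + 1 := fun k hk => hbn ▸ hmono k n hk le_rfl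
  have key : ∀ k ∈ Finset.range n,
      ∑ t ∈ Finset.Ico (b k) (b (k + 1)), w t * (d t k - d (t + 1) k) ≤
        f (b (k + 1)) k - f (b k) k := by
    intro k hk
    rw [Finset.mem_range] at hk
    have hle : b k ≤ b (k + 1) := le_of_lt (hbmono k hk)
    calc ∑ t ∈ Finset.Ico (b k) (b (k + 1)), w t * (d t k - d (t + 1) k)
        ≤ ∑ t ∈ Finset.Ico (b k) (b (k + 1)), (f (t + 1) k - f t k) := by
          apply Finset.sum_le_sum
          intro t ht
          rw [Finset.mem_Ico] at ht
          have ht1 : 1 ≤ t := le_trans (h1 k (by omega)) ht.1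
          have ht2 : t + 1 ≤ T + 1 := le_trans ht.2 (h2 (k + 1) (by omega))
          have hwle : w t ≤ w (t + 1) := hw t (Finset.mem_Icc.2 ⟨ht1, by omega⟩)
          have hd1 : d (t + 1) k ≤ D :=
            hD (t + 1) (Finset.mem_Icc.2 ⟨by omega, ht2⟩) k (Finset.mem_range.2 hk)
          have : w t * (D - d (t + 1) k) ≤ w (t + 1) * (D - d (t + 1) k) :=
            mul_le_mul_of_nonneg_right hwle (by linarith)
          simp only [hf]
          nlinarith [this]
      _ = f (b (k + 1)) k - f (b k) k := by
          rw [Finset.sum_Ico_eq_sub _ hle, Finset.sum_range_sub (fun i => f i k),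
            Finset.sum_range_sub (fun i => f i k)]
          ring
  have hsum : ∑ k ∈ Finset.range n, (f (b (k + 1)) k - f (b k) k) =
      w (T + 1) * (D - d (T + 1) (n - 1)) - w 1 * (D - d 1 0) +
      ∑ k ∈ Finset.range (n - 1),
        w (b (k + 1)) * (d (b (k + 1)) (k + 1) - d (b (k + 1)) k) := by
    obtain ⟨m, rfl⟩ : ∃ m, n = m + 1 := ⟨n - 1, by omega⟩
    rw [Finset.sum_sub_distrib, Finset.sum_range_succ, Finset.sum_range_succ' (fun k => f (b k) k)]
    simp only [Nat.add_sub_cancel, hb0, hbn, hf]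
    have hx : ∑ x ∈ Finset.range m, w (b (x + 1)) * (D - d (b (x + 1)) x) -
        ∑ x ∈ Finset.range m, w (b (x + 1)) * (D - d (b (x + 1)) (x + 1)) =
        ∑ x ∈ Finset.range m, w (b (x + 1)) * (d (b (x + 1)) (x + 1) - d (b (x + 1)) x) := by
      rw [← Finset.sum_sub_distrib]
      exact Finset.sum_congr rfl (fun k _ => by ring)
    linarith [hx]
  calc _ ≤ ∑ k ∈ Finset.range n, (f (b (k + 1)) k - f (b k) k) := Finset.sum_le_sum key
    _ = _ := hsum
end

section
/- (Scalar reduction for the progress invariant) Let 0 < α < 1, 0 < p ≤ 1 and 0 < q ≤ 1, and set p' = α·p + (1−α). Then log(1/p) − log(1/q) − (1/log(1/α))·(q·log(p'/(α·p)) − log(1/α)) ≤ log(p'/(α·p)). -/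
open Real

/-- Scalar reduction for the progress invariant (equation (7) with
`p' = α p + (1 − α)`, including the verification `f(q) ≤ F` for all `q`). -/
theorem scalar_reduction (α p q : ℝ) (hα0 : 0 < α) (hα1 : α < 1)
    (hp0 : 0 < p) (hp1 : p ≤ 1) (hq0 : 0 < q) (hq1 : q ≤ 1) :
    Real.log (1 / p) - Real.log (1 / q) -
        (1 / Real.log (1 / α)) *
          (q * Real.log ((α * p + (1 - α)) / (α * p)) - Real.log (1 / α)) ≤
      Real.log ((α * p + (1 - α)) / (α * p)) := by
  have h1α : 0 < 1 - α := by linarith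
  have hαp : 0 < α * p := mul_pos hα0 hp0
  set p' : ℝ := α * p + (1 - α) with hp'def
  have hp' : 0 < p' := by positivity
  set L : ℝ := Real.log (1 / α) with hLdef
  set C : ℝ := Real.log (p' / (α * p)) with hCdef
  have hL : 0 < L := Real.log_pos (one_lt_one_div hα0 hα1)
  have hLC : L ≤ C := by
    rw [hLdef, hCdef]
    apply Real.log_le_log (by positivity)
    rw [div_le_div_iff₀ hα0 hαp, hp'def]
    nlinarith [mul_nonneg (mul_nonneg hα0.le h1α.le) (sub_nonneg.mpr hp1)]
  have hC : 0 < C := lt_of_lt_of_le hL hLC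
  -- log identities
  have hLα : L = -Real.log α := by rw [hLdef, one_div, Real.log_inv]
  have hCeq : C = Real.log p' - Real.log α - Real.log p := by
    rw [hCdef, Real.log_div hp'.ne' hαp.ne', Real.log_mul hα0.ne' hp0.ne']
    ring
  -- inequality A : log q + log C - log L ≤ q*C/L - 1
  have hA : Real.log q + Real.log C - Real.log L ≤ q * C / L - 1 := by
    have h := Real.log_le_sub_one_of_pos (show (0:ℝ) < q * C / L by positivity)
    rw [Real.log_div (by positivity) hL.ne', Real.log_mul hq0.ne' hC.ne'] at h
    linarith
  -- inequality B : α * L ≤ 1 - α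
  have hB : α * L ≤ 1 - α := by
    have h := Real.log_le_sub_one_of_pos (show (0:ℝ) < 1 / α by positivity)
    rw [← hLdef] at h
    have h2 : α * L ≤ α * (1 / α - 1) := by
      exact mul_le_mul_of_nonneg_left h hα0.le
    have h3 : α * (1 / α - 1) = 1 - α := by field_simp
    linarith
  -- inequality C' : 1 - α ≤ C * p'
  have hCC : 1 - α ≤ C * p' := by
    have h := Real.log_le_sub_one_of_pos (show (0:ℝ) < α * p / p' by positivity)
    have hlog : Real.log (α * p / p') = -C := by
      rw [hCdef, ← Real.log_inv, inv_div]
    rw [hlog] at h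
    have h2 : α * p / p' - 1 = -((1 - α) / p') := by
      field_simp
      ring
    rw [h2] at h
    have h3 : (1 - α) / p' ≤ C := by linarith
    calc 1 - α = (1 - α) / p' * p' := by field_simp
    _ ≤ C * p' := mul_le_mul_of_nonneg_right h3 hp'.le
  -- inequality D : log L + log α ≤ log C + log p'
  have hD : Real.log L + Real.log α ≤ Real.log C + Real.log p' := by
    have hαL : 0 < α * L := mul_pos hα0 hL
    have h := Real.log_le_log hαL (le_trans hB hCC)
    rw [Real.log_mul hα0.ne' hL.ne', Real.log_mul hC.ne' hp'.ne'] at h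
    linarith
  -- assemble
  have h1p : Real.log (1 / p) = -Real.log p := by rw [one_div, Real.log_inv]
  have h1q : Real.log (1 / q) = -Real.log q := by rw [one_div, Real.log_inv]
  have heq : 1 / L * (q * C - L) = q * C / L - 1 := by
    field_simp
  rw [h1p, h1q, heq]
  linarith
end

section
/- (Share-factor-to-smoothing-rate sum bound) Let N ≥ 2 and T ≥ 2 be integers. Then ∑_{t=1}^{T} log((t+1)/t) · √(2·N·t / log(N·(t+1))) ≤ √(2N) · (1/√(log(2N)) + 8·√(T/log T)). -/
open Finset Real

lemma sum_inv_sqrt' (n : ℕ) : ∑ t ∈ Finset.Icc 1 n, (Real.sqrt t)⁻¹ ≤ 2 * Real.sqrt n := by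
  induction n with
  | zero => simp
  | succ n ih =>
    rw [Finset.sum_Icc_succ_top (by omega : 1 ≤ n + 1)]
    have ha : (0:ℝ) ≤ Real.sqrt n := Real.sqrt_nonneg _
    have hb : (0:ℝ) < Real.sqrt ((n:ℝ) + 1) := Real.sqrt_pos.mpr (by positivity)
    have ha2 : Real.sqrt n ^ 2 = (n:ℝ) := Real.sq_sqrt (by positivity)
    have hb2 : Real.sqrt ((n:ℝ)+1) ^ 2 = (n:ℝ)+1 := Real.sq_sqrt (by positivity)
    have key : (Real.sqrt ((n:ℝ)+1))⁻¹ ≤ 2 * (Real.sqrt ((n:ℝ)+1) - Real.sqrt n) := by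
      rw [inv_eq_one_div, div_le_iff₀ hb]
      nlinarith [sq_nonneg (Real.sqrt ((n:ℝ)+1) - Real.sqrt n)]
    push_cast
    push_cast at ih
    linarith

lemma pointwise_bd' (N t : ℕ) (hN : 2 ≤ N) (ht : 2 ≤ t) :
    Real.log (((t : ℝ) + 1) / (t : ℝ)) *
      Real.sqrt (2 * (N : ℝ) * (t : ℝ) / Real.log ((N : ℝ) * ((t : ℝ) + 1))) ≤
    Real.sqrt (2 * (N : ℝ)) * ((Real.sqrt t)⁻¹ * (Real.sqrt (Real.log t))⁻¹) := by
  have ht2 : (2:ℝ) ≤ (t:ℝ) := by exact_mod_cast ht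
  have ht0 : (0:ℝ) < t := by linarith
  have hN0 : (0:ℝ) < N := by positivity
  have hlogt : 0 < Real.log t := Real.log_pos (by linarith)
  have hst : (0:ℝ) < Real.sqrt t := Real.sqrt_pos.mpr ht0
  have h1 : Real.log (((t:ℝ) + 1) / t) ≤ 1 / t := by
    have := Real.log_le_sub_one_of_pos (show (0:ℝ) < ((t:ℝ)+1)/t by positivity)
    have e : ((t:ℝ)+1)/t - 1 = 1/t := by field_simp; ring
    linarith [e ▸ this]
  have h1' : 0 ≤ Real.log (((t:ℝ) + 1) / t) := by
    apply Real.log_nonneg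
    rw [le_div_iff₀ ht0]; linarith
  have h2 : Real.log t ≤ Real.log ((N:ℝ) * ((t:ℝ)+1)) := by
    apply Real.log_le_log ht0
    have : (2:ℝ) ≤ (N:ℝ) := by exact_mod_cast hN
    nlinarith
  have h3 : Real.sqrt (2 * (N:ℝ) * t / Real.log ((N:ℝ) * ((t:ℝ)+1))) ≤
      Real.sqrt (2 * (N:ℝ) * t / Real.log t) := by
    apply Real.sqrt_le_sqrt
    apply div_le_div_of_nonneg_left (by positivity) hlogt h2
  have h4 : Real.sqrt (2 * (N:ℝ) * t / Real.log t)
      = Real.sqrt (2 * (N:ℝ)) * (Real.sqrt t / Real.sqrt (Real.log t)) := by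
    rw [show 2 * (N:ℝ) * t / Real.log t = (2*(N:ℝ)) * ((t:ℝ) / Real.log t) by ring,
      Real.sqrt_mul (by positivity), Real.sqrt_div (by positivity)]
  calc Real.log (((t:ℝ) + 1) / t) * Real.sqrt (2 * (N:ℝ) * t / Real.log ((N:ℝ) * ((t:ℝ)+1)))
      ≤ (1/t) * (Real.sqrt (2 * (N:ℝ)) * (Real.sqrt t / Real.sqrt (Real.log t))) := by
        apply mul_le_mul h1 (h4 ▸ h3) (Real.sqrt_nonneg _) (by positivity)
    _ = Real.sqrt (2 * (N:ℝ)) * ((Real.sqrt t)⁻¹ * (Real.sqrt (Real.log t))⁻¹) := by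
        have e : (1/(t:ℝ)) = (Real.sqrt t)⁻¹ * (Real.sqrt t)⁻¹ := by
          rw [← mul_inv, Real.mul_self_sqrt (le_of_lt ht0), one_div]
        rw [e, div_eq_mul_inv]
        field_simp

/-- **Share-factor-to-smoothing-rate sum bound** (equation (23)):
`∑_{t=1}^T log(1/(1−ε_t))/log(1/α_t) ≤ √(2N)·(1/√(log 2N) + 8√(T/log T))`
for `ε_t = 1/(t+1)` and `α_t = exp(−√(log(N(t+1))/(2Nt)))`. -/
theorem share_factor_sum_bound (N T : ℕ) (hN : 2 ≤ N) (hT : 2 ≤ T) :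
    ∑ t ∈ Finset.Icc 1 T,
        Real.log (((t : ℝ) + 1) / (t : ℝ)) *
          Real.sqrt (2 * (N : ℝ) * (t : ℝ) / Real.log ((N : ℝ) * ((t : ℝ) + 1))) ≤
      Real.sqrt (2 * (N : ℝ)) *
        (1 / Real.sqrt (Real.log (2 * (N : ℝ))) +
          8 * Real.sqrt ((T : ℝ) / Real.log (T : ℝ))) := by
  set f : ℕ → ℝ := fun t => Real.log (((t : ℝ) + 1) / (t : ℝ)) *
      Real.sqrt (2 * (N : ℝ) * (t : ℝ) / Real.log ((N : ℝ) * ((t : ℝ) + 1))) with hf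
  set K := Nat.sqrt T with hKdef
  have hK1 : 1 ≤ K := Nat.sqrt_pos.mpr (by omega)
  have hKT : K ≤ T := Nat.sqrt_le_self T
  have hTf : (2:ℝ) ≤ (T:ℝ) := by exact_mod_cast hT
  have hNf : (2:ℝ) ≤ (N:ℝ) := by exact_mod_cast hN
  have hlogT : 0 < Real.log T := Real.log_pos (by linarith)
  have hsT : (0:ℝ) < Real.sqrt T := Real.sqrt_pos.mpr (by linarith)
  have hslogT : (0:ℝ) < Real.sqrt (Real.log T) := Real.sqrt_pos.mpr hlogT
  have hc : (0:ℝ) ≤ Real.sqrt (2 * (N:ℝ)) := Real.sqrt_nonneg _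
  -- log T ≤ 2 √T
  have hlog2T : Real.log T ≤ 2 * Real.sqrt T := by
    have h := Real.log_le_sub_one_of_pos hsT
    rw [Real.log_sqrt (by positivity)] at h
    linarith
  -- split the sum
  have e0 : Finset.Icc 1 T = Finset.Ioc 0 T := by rw [← Finset.Icc_add_one_left_eq_Ioc]; rfl
  have split1 : (∑ t ∈ Finset.Ioc 0 1, f t) + ∑ t ∈ Finset.Ioc 1 T, f t
      = ∑ t ∈ Finset.Ioc 0 T, f t := Finset.sum_Ioc_consecutive f (by omega) (by omega)
  have split2 : (∑ t ∈ Finset.Ioc 1 K, f t) + ∑ t ∈ Finset.Ioc K T, f t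
      = ∑ t ∈ Finset.Ioc 1 T, f t := Finset.sum_Ioc_consecutive f hK1 hKT
  have e1 : ∑ t ∈ Finset.Ioc 0 1, f t = f 1 := by
    rw [← Finset.Icc_add_one_left_eq_Ioc]; simp
  -- nonnegativity of f on t ≥ 1
  have hfnn : ∀ t : ℕ, 0 ≤ f t := by
    intro t
    rcases Nat.eq_zero_or_pos t with h | h
    · subst h; simp [hf]
    · apply mul_nonneg _ (Real.sqrt_nonneg _)
      apply Real.log_nonneg
      have : (0:ℝ) < t := by exact_mod_cast h
      rw [le_div_iff₀ this]; linarith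
  -- bound on f 1
  have hlog2N : 0 < Real.log (2 * (N:ℝ)) := Real.log_pos (by linarith)
  have hf1 : f 1 ≤ Real.sqrt (2 * (N:ℝ)) * (1 / Real.sqrt (Real.log (2 * (N:ℝ)))) := by
    have hlog2 : Real.log ((1:ℝ)+1) ≤ 1 := by
      have := Real.log_le_sub_one_of_pos (show (0:ℝ) < 2 by norm_num)
      norm_num at this ⊢; linarith
    have e2 : f 1 = Real.log 2 * Real.sqrt (2 * (N:ℝ) / Real.log (2 * (N:ℝ))) := by
      simp only [hf]
      norm_num
      rw [show (N:ℝ) * 2 = 2 * (N:ℝ) by ring]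
    rw [e2, Real.sqrt_div (by positivity)]
    have h01 : 0 ≤ Real.log 2 := Real.log_nonneg (by norm_num)
    have := Real.sqrt_nonneg (2*(N:ℝ))
    calc Real.log 2 * (Real.sqrt (2*(N:ℝ)) / Real.sqrt (Real.log (2*(N:ℝ))))
        ≤ 1 * (Real.sqrt (2*(N:ℝ)) / Real.sqrt (Real.log (2*(N:ℝ)))) := by
          apply mul_le_mul_of_nonneg_right _ (by positivity)
          norm_num at hlog2; exact hlog2
      _ = Real.sqrt (2*(N:ℝ)) * (1 / Real.sqrt (Real.log (2*(N:ℝ)))) := by ring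
  -- piece A
  have hA : ∑ t ∈ Finset.Ioc 1 K, f t ≤ Real.sqrt (2*(N:ℝ)) * (3 * Real.sqrt K) := by
    have hterm : ∀ t ∈ Finset.Ioc 1 K, f t ≤ Real.sqrt (2*(N:ℝ)) * ((3/2) * (Real.sqrt t)⁻¹) := by
      intro t htm
      rw [Finset.mem_Ioc] at htm
      have ht2 : 2 ≤ t := htm.1
      have hlogt : (4/9 : ℝ) ≤ Real.log t := by
        have : Real.log 2 ≤ Real.log t := by
          apply Real.log_le_log (by norm_num)
          exact_mod_cast ht2
        have h2 := Real.log_two_gt_d9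
        linarith
      have hinv : (Real.sqrt (Real.log t))⁻¹ ≤ 3/2 := by
        have h23 : (2/3 : ℝ) ≤ Real.sqrt (Real.log t) := by
          rw [show (2/3:ℝ) = Real.sqrt ((2/3)^2) by rw [Real.sqrt_sq]; norm_num]
          apply Real.sqrt_le_sqrt; norm_num; linarith
        calc (Real.sqrt (Real.log t))⁻¹ ≤ ((2:ℝ)/3)⁻¹ := inv_anti₀ (by norm_num) h23
          _ = 3/2 := by norm_num
      calc f t ≤ Real.sqrt (2*(N:ℝ)) * ((Real.sqrt t)⁻¹ * (Real.sqrt (Real.log t))⁻¹) :=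
            pointwise_bd' N t hN ht2
        _ ≤ Real.sqrt (2*(N:ℝ)) * ((3/2) * (Real.sqrt t)⁻¹) := by
            apply mul_le_mul_of_nonneg_left _ hc
            rw [mul_comm]
            apply mul_le_mul_of_nonneg_right hinv (by positivity)
    calc ∑ t ∈ Finset.Ioc 1 K, f t
        ≤ ∑ t ∈ Finset.Ioc 1 K, Real.sqrt (2*(N:ℝ)) * ((3/2) * (Real.sqrt t)⁻¹) :=
          Finset.sum_le_sum hterm
      _ = (Real.sqrt (2*(N:ℝ)) * (3/2)) * ∑ t ∈ Finset.Ioc 1 K, (Real.sqrt t)⁻¹ := by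
          rw [Finset.mul_sum]; apply Finset.sum_congr rfl; intro t _; ring
      _ ≤ (Real.sqrt (2*(N:ℝ)) * (3/2)) * (2 * Real.sqrt K) := by
          apply mul_le_mul_of_nonneg_left _ (by positivity)
          calc ∑ t ∈ Finset.Ioc 1 K, (Real.sqrt t)⁻¹
              ≤ ∑ t ∈ Finset.Icc 1 K, (Real.sqrt t)⁻¹ := by
                apply Finset.sum_le_sum_of_subset_of_nonneg
                · intro x hx; rw [Finset.mem_Ioc] at hx; rw [Finset.mem_Icc]; omega
                · intro i _ _; positivity
            _ ≤ 2 * Real.sqrt K := sum_inv_sqrt' K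
      _ = Real.sqrt (2*(N:ℝ)) * (3 * Real.sqrt K) := by ring
  -- piece B
  have hB : ∑ t ∈ Finset.Ioc K T, f t
      ≤ Real.sqrt (2*(N:ℝ)) * (2 * Real.sqrt 2 * (Real.sqrt T / Real.sqrt (Real.log T))) := by
    have hterm : ∀ t ∈ Finset.Ioc K T, f t
        ≤ Real.sqrt (2*(N:ℝ)) * ((Real.sqrt 2 / Real.sqrt (Real.log T)) * (Real.sqrt t)⁻¹) := by
      intro t htm
      rw [Finset.mem_Ioc] at htm
      have ht2 : 2 ≤ t := by omega
      have ht2f : (2:ℝ) ≤ (t:ℝ) := by exact_mod_cast ht2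
      have hlogt : 0 < Real.log t := Real.log_pos (by linarith)
      -- T < (K+1)^2 ≤ t^2
      have hTt : (T:ℝ) ≤ (t:ℝ)^2 := by
        have h1 : T < (K+1)^2 := Nat.lt_succ_sqrt' T
        have h2 : K + 1 ≤ t := by omega
        have : T ≤ t^2 := by nlinarith
        exact_mod_cast this
      have hloghalf : Real.log T / 2 ≤ Real.log t := by
        have : Real.log T ≤ Real.log ((t:ℝ)^2) := Real.log_le_log (by linarith) hTt
        rw [Real.log_pow] at this
        push_cast at this
        linarith
      have hinv : (Real.sqrt (Real.log t))⁻¹ ≤ Real.sqrt 2 / Real.sqrt (Real.log T) := by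
        have hs : Real.sqrt (Real.log T) / Real.sqrt 2 ≤ Real.sqrt (Real.log t) := by
          rw [← Real.sqrt_div (le_of_lt hlogT)]
          exact Real.sqrt_le_sqrt hloghalf
        have hpos2 : (0:ℝ) < Real.sqrt (Real.log T) / Real.sqrt 2 := by positivity
        calc (Real.sqrt (Real.log t))⁻¹ ≤ (Real.sqrt (Real.log T) / Real.sqrt 2)⁻¹ :=
              inv_anti₀ hpos2 hs
          _ = Real.sqrt 2 / Real.sqrt (Real.log T) := by rw [inv_div]
      calc f t ≤ Real.sqrt (2*(N:ℝ)) * ((Real.sqrt t)⁻¹ * (Real.sqrt (Real.log t))⁻¹) :=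
            pointwise_bd' N t hN ht2
        _ ≤ Real.sqrt (2*(N:ℝ)) * ((Real.sqrt 2 / Real.sqrt (Real.log T)) * (Real.sqrt t)⁻¹) := by
            apply mul_le_mul_of_nonneg_left _ hc
            rw [mul_comm]
            apply mul_le_mul_of_nonneg_right hinv (by positivity)
    calc ∑ t ∈ Finset.Ioc K T, f t
        ≤ ∑ t ∈ Finset.Ioc K T, Real.sqrt (2*(N:ℝ)) * ((Real.sqrt 2 / Real.sqrt (Real.log T)) * (Real.sqrt t)⁻¹) :=
          Finset.sum_le_sum hterm
      _ = (Real.sqrt (2*(N:ℝ)) * (Real.sqrt 2 / Real.sqrt (Real.log T))) * ∑ t ∈ Finset.Ioc K T, (Real.sqrt t)⁻¹ := by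
          rw [Finset.mul_sum]; apply Finset.sum_congr rfl; intro t _; ring
      _ ≤ (Real.sqrt (2*(N:ℝ)) * (Real.sqrt 2 / Real.sqrt (Real.log T))) * (2 * Real.sqrt T) := by
          apply mul_le_mul_of_nonneg_left _ (by positivity)
          calc ∑ t ∈ Finset.Ioc K T, (Real.sqrt t)⁻¹
              ≤ ∑ t ∈ Finset.Icc 1 T, (Real.sqrt t)⁻¹ := by
                apply Finset.sum_le_sum_of_subset_of_nonneg
                · intro x hx; rw [Finset.mem_Ioc] at hx; rw [Finset.mem_Icc]; omega
                · intro i _ _; positivity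
            _ ≤ 2 * Real.sqrt T := sum_inv_sqrt' T
      _ = Real.sqrt (2*(N:ℝ)) * (2 * Real.sqrt 2 * (Real.sqrt T / Real.sqrt (Real.log T))) := by ring
  -- √K ≤ √2 · √T/√(log T)
  have hKb : Real.sqrt K ≤ Real.sqrt 2 * (Real.sqrt T / Real.sqrt (Real.log T)) := by
    have h1 : (K:ℝ) ≤ Real.sqrt T := by
      rw [Real.le_sqrt (by positivity) (by positivity)]
      have : K^2 ≤ T := Nat.sqrt_le' T
      exact_mod_cast this
    have h2 : Real.sqrt K ≤ Real.sqrt (Real.sqrt T) := Real.sqrt_le_sqrt h1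
    have h3 : Real.sqrt (Real.sqrt T) * Real.sqrt (Real.log T) ≤ Real.sqrt 2 * Real.sqrt T := by
      rw [← Real.sqrt_mul (Real.sqrt_nonneg _), ← Real.sqrt_mul (by norm_num : (0:ℝ) ≤ 2)]
      apply Real.sqrt_le_sqrt
      have hTT : Real.sqrt T * Real.sqrt T = (T:ℝ) := Real.mul_self_sqrt (by positivity)
      nlinarith
    calc Real.sqrt K ≤ Real.sqrt (Real.sqrt T) := h2
      _ ≤ Real.sqrt 2 * Real.sqrt T / Real.sqrt (Real.log T) := (le_div_iff₀ hslogT).mpr h3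
      _ = Real.sqrt 2 * (Real.sqrt T / Real.sqrt (Real.log T)) := by ring
  -- √2 ≤ 3/2
  have hsqrt2 : Real.sqrt 2 ≤ 3/2 := by
    nlinarith [Real.sq_sqrt (show (0:ℝ) ≤ 2 by norm_num), Real.sqrt_nonneg 2]
  -- final assembly
  have eRHS : Real.sqrt ((T:ℝ) / Real.log T) = Real.sqrt T / Real.sqrt (Real.log T) :=
    Real.sqrt_div (by positivity) _
  have hsum : ∑ t ∈ Finset.Icc 1 T, f t = f 1 + ((∑ t ∈ Finset.Ioc 1 K, f t) + ∑ t ∈ Finset.Ioc K T, f t) := by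
    rw [e0, ← split1, e1, split2]
  rw [hsum]
  have hpos : (0:ℝ) ≤ Real.sqrt T / Real.sqrt (Real.log T) := by positivity
  have h3K : 3 * Real.sqrt K ≤ 3 * Real.sqrt 2 * (Real.sqrt T / Real.sqrt (Real.log T)) := by
    linarith [hKb]
  have hfinal : 3 * Real.sqrt K + 2 * Real.sqrt 2 * (Real.sqrt T / Real.sqrt (Real.log T))
      ≤ 8 * (Real.sqrt T / Real.sqrt (Real.log T)) := by
    linarith [mul_le_mul_of_nonneg_right hsqrt2 hpos]
  calc f 1 + ((∑ t ∈ Finset.Ioc 1 K, f t) + ∑ t ∈ Finset.Ioc K T, f t)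
      ≤ Real.sqrt (2*(N:ℝ)) * (1 / Real.sqrt (Real.log (2 * (N:ℝ))))
        + (Real.sqrt (2*(N:ℝ)) * (3 * Real.sqrt K)
          + Real.sqrt (2*(N:ℝ)) * (2 * Real.sqrt 2 * (Real.sqrt T / Real.sqrt (Real.log T)))) := by
        exact add_le_add hf1 (add_le_add hA hB)
    _ ≤ Real.sqrt (2*(N:ℝ)) * (1 / Real.sqrt (Real.log (2 * (N:ℝ))))
        + Real.sqrt (2*(N:ℝ)) * (8 * (Real.sqrt T / Real.sqrt (Real.log T))) := by
        rw [← mul_add]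
        have := mul_le_mul_of_nonneg_left hfinal hc
        linarith
    _ = Real.sqrt (2 * (N : ℝ)) *
        (1 / Real.sqrt (Real.log (2 * (N : ℝ))) + 8 * Real.sqrt ((T : ℝ) / Real.log (T : ℝ))) := by
        rw [eRHS]; ring
end

section
/- (Smoothing-rate sum bound) Let N ≥ 2 and T ≥ 1 be integers. Then ∑_{t=1}^{T} √(log(N·(t+1)) / (2·N·t)) ≤ √(2·(T+1)·log(N·(T+1)) / N). -/
open Finset Real

lemma sum_inv_sqrt_le (T : ℕ) :
    ∑ t ∈ Finset.Icc 1 T, 1 / Real.sqrt (t : ℝ) ≤ 2 * Real.sqrt (T : ℝ) := by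
  induction T with
  | zero => simp
  | succ n ih =>
    rw [Finset.sum_Icc_succ_top (by omega : 1 ≤ n + 1)]
    have h1 : (0:ℝ) ≤ (n:ℝ) := Nat.cast_nonneg n
    have hb : (0:ℝ) < Real.sqrt ((n:ℝ) + 1) := Real.sqrt_pos.mpr (by linarith)
    have ha2 : Real.sqrt (n:ℝ) ^ 2 = (n:ℝ) := Real.sq_sqrt h1
    have hb2 : Real.sqrt ((n:ℝ) + 1) ^ 2 = (n:ℝ) + 1 := Real.sq_sqrt (by linarith)
    have ha : (0:ℝ) ≤ Real.sqrt (n:ℝ) := Real.sqrt_nonneg _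
    have key : 2 * Real.sqrt (n:ℝ) + 1 / Real.sqrt ((n:ℝ) + 1)
        ≤ 2 * Real.sqrt ((n:ℝ) + 1) := by
      have hinv : 1 / Real.sqrt ((n:ℝ) + 1) * Real.sqrt ((n:ℝ) + 1) = 1 :=
        one_div_mul_cancel hb.ne'
      nlinarith [sq_nonneg (Real.sqrt (n:ℝ) - Real.sqrt ((n:ℝ)+1)),
        mul_pos hb hb]
    have := add_le_add_right ih (1 / Real.sqrt ((↑n:ℝ) + 1))
    push_cast
    linarith

/-- **Smoothing-rate sum bound** (equation (26)):
`∑_{t=1}^T log(1/α_t) ≤ √(2(T+1)·log(N(T+1))/N)` for the varying smoothing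
rate `α_t = exp(−√(log(N(t+1))/(2Nt)))`. -/
theorem smoothing_rate_sum_bound (N T : ℕ) (hN : 2 ≤ N) (hT : 1 ≤ T) :
    ∑ t ∈ Finset.Icc 1 T,
        Real.sqrt (Real.log ((N : ℝ) * ((t : ℝ) + 1)) / (2 * (N : ℝ) * (t : ℝ))) ≤
      Real.sqrt (2 * ((T : ℝ) + 1) * Real.log ((N : ℝ) * ((T : ℝ) + 1)) / (N : ℝ)) := by
  set L : ℝ := Real.log ((N : ℝ) * ((T : ℝ) + 1)) with hL
  have hN1 : (1:ℝ) ≤ (N:ℝ) := by exact_mod_cast Nat.one_le_of_lt hN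
  have hNpos : (0:ℝ) < (N:ℝ) := by linarith
  have hLnn : 0 ≤ L := by
    apply Real.log_nonneg
    have : (0:ℝ) ≤ (T:ℝ) := Nat.cast_nonneg T
    nlinarith
  -- bound each term
  have step : ∀ t ∈ Finset.Icc 1 T,
      Real.sqrt (Real.log ((N : ℝ) * ((t : ℝ) + 1)) / (2 * (N : ℝ) * (t : ℝ)))
        ≤ Real.sqrt (L / (2 * (N:ℝ))) * (1 / Real.sqrt (t : ℝ)) := by
    intro t ht
    simp only [Finset.mem_Icc] at ht
    have ht1 : (1:ℝ) ≤ (t:ℝ) := by exact_mod_cast ht.1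
    have htT : (t:ℝ) ≤ (T:ℝ) := by exact_mod_cast ht.2
    have htpos : (0:ℝ) < (t:ℝ) := by linarith
    have hlog : Real.log ((N : ℝ) * ((t : ℝ) + 1)) ≤ L := by
      apply Real.log_le_log (by positivity)
      nlinarith
    have : Real.log ((N : ℝ) * ((t : ℝ) + 1)) / (2 * (N : ℝ) * (t : ℝ))
        ≤ L / (2 * (N:ℝ)) / (t:ℝ) := by
      rw [div_div]
      apply div_le_div_of_nonneg_right hlog  -- maybe wrong name
      all_goals positivity
    calc Real.sqrt (Real.log ((N : ℝ) * ((t : ℝ) + 1)) / (2 * (N : ℝ) * (t : ℝ)))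
        ≤ Real.sqrt (L / (2 * (N:ℝ)) / (t:ℝ)) := Real.sqrt_le_sqrt this
      _ = Real.sqrt (L / (2 * (N:ℝ))) * (1 / Real.sqrt (t:ℝ)) := by
          rw [Real.sqrt_div (div_nonneg hLnn (by positivity)), div_eq_mul_one_div]
  have h1 : ∑ t ∈ Finset.Icc 1 T,
        Real.sqrt (Real.log ((N : ℝ) * ((t : ℝ) + 1)) / (2 * (N : ℝ) * (t : ℝ)))
      ≤ Real.sqrt (L / (2 * (N:ℝ))) * ∑ t ∈ Finset.Icc 1 T, (1 / Real.sqrt (t : ℝ)) := by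
    rw [Finset.mul_sum]
    exact Finset.sum_le_sum step
  have h2 : Real.sqrt (L / (2 * (N:ℝ))) * ∑ t ∈ Finset.Icc 1 T, (1 / Real.sqrt (t : ℝ))
      ≤ Real.sqrt (L / (2 * (N:ℝ))) * (2 * Real.sqrt ((T:ℝ))) := by
    apply mul_le_mul_of_nonneg_left _ (Real.sqrt_nonneg _)
    exact_mod_cast sum_inv_sqrt_le T
  have h3 : Real.sqrt (L / (2 * (N:ℝ))) * (2 * Real.sqrt ((T:ℝ)))
      ≤ Real.sqrt (2 * ((T : ℝ) + 1) * L / (N : ℝ)) := by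
    have : Real.sqrt (L / (2 * (N:ℝ))) * (2 * Real.sqrt ((T:ℝ)))
        = Real.sqrt (L / (2 * (N:ℝ)) * (4 * (T:ℝ))) := by
      rw [Real.sqrt_mul (by positivity), show (4:ℝ) * (T:ℝ) = (2:ℝ)^2 * (T:ℝ) by ring,
        Real.sqrt_mul (by positivity), Real.sqrt_sq (by norm_num)]
    rw [this]
    apply Real.sqrt_le_sqrt
    have hT1 : (0:ℝ) ≤ (T:ℝ) := Nat.cast_nonneg T
    rw [div_mul_eq_mul_div, div_le_div_iff₀ (by positivity) (by positivity)]
    nlinarith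
  linarith
end
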